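/- Let Q_{4n} be the binary dihedral group of order 4n generated by a, b with a^n = b^2, b^4 = 1, aba = b. The rational group algebra ℚ[Q_{4n}] contains as a direct summand, for each odd divisor d of n, the ℚ-subalgebra of the real quaternions generated by ℚ(ζ_{2n/d}) ⊂ ℝ[i] and j; in particular dim_ℚ ℚ[D_{2n}] + Σ_{d | m} 2φ(2n/d) = 4n, where m is the odd part of 4n. -/

import Mathlib

open Real Quaternion

noncomputable def zq (α : ℝ) : Quaternion ℝ := ⟨Real.cos α, Real.sin α, 0, 0⟩

noncomputable def jq : Quaternion ℝ := ⟨0, 0, 1, 0⟩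

lemma zq_mul (α β : ℝ) : zq α * zq β = zq (α + β) := by
  apply Quaternion.ext <;>
  simp only [Quaternion.re_mul, Quaternion.imI_mul, Quaternion.imJ_mul, Quaternion.imK_mul] <;>
  simp [zq, Quaternion.re_mul, Quaternion.imI_mul, Quaternion.imJ_mul, Quaternion.imK_mul,
    Real.cos_add, Real.sin_add] <;> ring

lemma zq_zero : zq 0 = 1 := by
  apply Quaternion.ext <;> simp [zq]

lemma zq_per (α : ℝ) (k : ℕ) : zq (α + k * (2 * π)) = zq α := by
  simp [zq, Real.cos_add_nat_mul_two_pi, Real.sin_add_nat_mul_two_pi]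
  rfl

lemma jq_mul_zq (α : ℝ) : jq * zq α = zq (-α) * jq := by
  apply Quaternion.ext <;>
  simp only [Quaternion.re_mul, Quaternion.imI_mul, Quaternion.imJ_mul, Quaternion.imK_mul] <;>
  simp [zq, jq, Quaternion.re_mul, Quaternion.imI_mul, Quaternion.imJ_mul, Quaternion.imK_mul]

lemma jq_mul_jq : jq * jq = -1 := by
  apply Quaternion.ext <;>
  simp only [Quaternion.re_mul, Quaternion.imI_mul, Quaternion.imJ_mul, Quaternion.imK_mul] <;>
  simp [jq, Quaternion.re_mul, Quaternion.imI_mul, Quaternion.imJ_mul, Quaternion.imK_mul]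

lemma zq_pow (α : ℝ) (k : ℕ) : zq α ^ k = zq (k * α) := by
  induction k with
  | zero => simp [zq_zero]
  | succ k ih => rw [pow_succ, ih, zq_mul]; congr 1; push_cast; ring

lemma zq_pi_odd (d : ℕ) (hd : Odd d) : zq (π * d) = -1 := by
  have hc : Real.cos (π * d) = -1 := by
    have := Real.cos_nat_mul_pi_sub 0 d
    simp [hd.neg_one_pow] at this
    rw [mul_comm]; exact this
  have hs : Real.sin (π * d) = 0 := by rw [mul_comm]; exact Real.sin_nat_mul_pi d
  apply Quaternion.ext <;> simp [zq, hc, hs]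

lemma key_hom (n : ℕ) (hn : 0 < n) (d : ℕ) (hd : Odd d) :
    ∃ f : MonoidAlgebra ℚ (QuaternionGroup n) →ₐ[ℚ] Quaternion ℝ,
      f.range = Algebra.adjoin ℚ {zq (π * d / n), jq} := by
  haveI : NeZero (2 * n) := ⟨by omega⟩
  haveI : Fact (1 < 2 * n) := ⟨by omega⟩
  set θ : ℝ := π * d / n with hθ
  have hn' : (n : ℝ) ≠ 0 := by positivity
  have h2pi : θ * (2 * n) = d * (2 * π) := by rw [hθ]; field_simp
  set zz : ZMod (2 * n) → Quaternion ℝ := fun i => zq (θ * i.val) with hzz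
  set yy : ZMod (2 * n) → Quaternion ℝ := fun i => zq (-(θ * i.val)) with hyy
  have hzk : ∀ k : ℕ, zq (θ * k) = zz ((k : ZMod (2 * n))) := by
    intro k
    have hval : ((k : ZMod (2 * n))).val = k % (2 * n) := ZMod.val_natCast (2 * n) k
    show _ = zq (θ * (((k : ZMod (2 * n)).val : ℕ) : ℝ))
    rw [hval]
    have h1 : θ * (k : ℝ) = θ * ((k % (2 * n) : ℕ) : ℝ) + ((k / (2 * n) * d : ℕ) : ℝ) * (2 * π) := by
      conv_lhs => rw [← Nat.mod_add_div k (2 * n)]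
      push_cast
      linear_combination ((k / (2 * n) : ℕ) : ℝ) * h2pi
    rw [h1, zq_per]
  have hzz0 : zz 0 = 1 := by simp [hzz, ZMod.val_zero, zq_zero]
  have hyy0 : yy 0 = 1 := by simp [hyy, ZMod.val_zero, zq_zero]
  have hzz_add : ∀ i j : ZMod (2 * n), zz (i + j) = zz i * zz j := by
    intro i j
    have e : ((i.val + j.val : ℕ) : ZMod (2 * n)) = i + j := by
      push_cast
      rw [ZMod.natCast_rightInverse i, ZMod.natCast_rightInverse j]
    calc zz (i + j) = zz (((i.val + j.val : ℕ)) : ZMod (2 * n)) := by rw [e]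
      _ = zq (θ * ((i.val + j.val : ℕ) : ℝ)) := (hzk _).symm
      _ = zq (θ * i.val + θ * j.val) := by push_cast; ring_nf
      _ = zz i * zz j := by rw [hzz]; rw [zq_mul]
  have hyz : ∀ i, yy i * zz i = 1 := by
    intro i; show zq _ * zq _ = 1; rw [zq_mul, neg_add_cancel, zq_zero]
  have hzy : ∀ i, zz i * yy i = 1 := by
    intro i; show zq _ * zq _ = 1; rw [zq_mul, add_neg_cancel, zq_zero]
  have hzz_neg : ∀ i, zz (-i) = yy i := by
    intro i
    have h1 : zz (-i) * zz i = 1 := by rw [← hzz_add, neg_add_cancel]; exact hzz0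
    calc zz (-i) = zz (-i) * (zz i * yy i) := by rw [hzy, mul_one]
      _ = (zz (-i) * zz i) * yy i := by rw [mul_assoc]
      _ = yy i := by rw [h1, one_mul]
  have hyy_add : ∀ i j : ZMod (2 * n), yy (i + j) = yy i * yy j := by
    intro i j
    rw [← hzz_neg, ← hzz_neg, ← hzz_neg, ← hzz_add, neg_add]
  have hjz : ∀ i, jq * zz i = yy i * jq := fun i => jq_mul_zq _
  have hjy : ∀ i, jq * yy i = zz i * jq := by
    intro i
    have := jq_mul_zq (-(θ * i.val))
    rw [neg_neg] at this
    exact this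
  have hcomm : ∀ i j, yy i * zz j = zz j * yy i := by
    intro i j; show zq _ * zq _ = zq _ * zq _; rw [zq_mul, zq_mul, add_comm]
  have hzn : zz ((n : ZMod (2 * n))) = -1 := by
    show zq _ = -1
    rw [ZMod.val_natCast_of_lt (by omega : n < 2 * n)]
    have : θ * (n : ℝ) = π * d := by rw [hθ]; field_simp
    rw [this]
    exact zq_pi_odd d hd
  have hyn : yy ((n : ZMod (2 * n))) = -1 := by
    calc yy (n : ZMod (2 * n)) = yy n * (zz n * zz n) := by rw [hzn]; norm_num
      _ = (yy n * zz n) * zz n := by rw [mul_assoc]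
      _ = zz (n : ZMod (2 * n)) := by rw [hyz, one_mul]
      _ = -1 := hzn
  have hyz_neg : ∀ i, yy (-i) = zz i := by
    intro i
    have := hzz_neg (-i)
    rw [neg_neg] at this
    exact this.symm
  -- the monoid hom
  set F : QuaternionGroup n → Quaternion ℝ := fun g =>
    match g with
    | QuaternionGroup.a i => yy i
    | QuaternionGroup.xa i => zz i * jq with hF
  have hFa : ∀ i, F (QuaternionGroup.a i) = yy i := fun _ => rfl
  have hFxa : ∀ i, F (QuaternionGroup.xa i) = zz i * jq := fun _ => rfl
  set φ : QuaternionGroup n →* Quaternion ℝ :=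
    { toFun := F
      map_one' := by
        show F (QuaternionGroup.a 0) = 1
        rw [hFa]; exact hyy0
      map_mul' := by
        rintro (i | i) (j | j)
        · show yy (i + j) = yy i * yy j
          exact hyy_add i j
        · show zz (j - i) * jq = yy i * (zz j * jq)
          rw [sub_eq_add_neg, hzz_add, hzz_neg, ← hcomm, mul_assoc]
        · show zz (i + j) * jq = (zz i * jq) * yy j
          rw [mul_assoc, hjy j, ← mul_assoc, ← hzz_add]
        · show yy ((n : ZMod (2 * n)) + j - i) = (zz i * jq) * (zz j * jq)
          have rhs : (zz i * jq) * (zz j * jq) = -(zz i * yy j) := by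
            calc (zz i * jq) * (zz j * jq)
                = zz i * ((jq * zz j) * jq) := by simp only [mul_assoc]
              _ = zz i * ((yy j * jq) * jq) := by rw [hjz]
              _ = (zz i * yy j) * (jq * jq) := by simp only [mul_assoc]
              _ = -(zz i * yy j) := by rw [jq_mul_jq, mul_neg_one]
          rw [rhs, sub_eq_add_neg, hyy_add, hyy_add, hyn, hyz_neg, mul_assoc,
            hcomm, neg_one_mul] } with hφ
  set f : MonoidAlgebra ℚ (QuaternionGroup n) →ₐ[ℚ] Quaternion ℝ :=
    MonoidAlgebra.lift ℚ (Quaternion ℝ) (QuaternionGroup n) φ with hf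
  refine ⟨f, le_antisymm ?_ ?_⟩
  · rintro x ⟨p, rfl⟩
    have hzmem : zq θ ∈ Algebra.adjoin ℚ {zq θ, jq} :=
      Algebra.subset_adjoin (Set.mem_insert _ _)
    have hjmem : jq ∈ Algebra.adjoin ℚ {zq θ, jq} :=
      Algebra.subset_adjoin (Set.mem_insert_of_mem _ rfl)
    have hzzmem : ∀ i : ZMod (2 * n), zz i ∈ Algebra.adjoin ℚ {zq θ, jq} := by
      intro i
      have : zz i = zq θ ^ i.val := by rw [zq_pow, mul_comm]
      rw [this]; exact pow_mem hzmem _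
    induction p using MonoidAlgebra.induction_on with
    | of g =>
      show f (MonoidAlgebra.of ℚ (QuaternionGroup n) g) ∈ _
      rw [hf, MonoidAlgebra.lift_of]
      rcases g with i | i
      · show yy i ∈ _
        rw [← hzz_neg]; exact hzzmem _
      · show zz i * jq ∈ _
        exact mul_mem (hzzmem i) hjmem
    | add p q hp hq =>
      show f (p + q) ∈ _
      rw [map_add]; exact add_mem hp hq
    | smul r p hp =>
      show f (r • p) ∈ _
      rw [map_smul]; exact Subalgebra.smul_mem _ hp r
  · apply Algebra.adjoin_le
    rintro x hx
    rcases Set.mem_insert_iff.mp hx with rfl | hx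
    · refine ⟨MonoidAlgebra.of ℚ _ (QuaternionGroup.a (-1)), ?_⟩
      show f (MonoidAlgebra.of ℚ (QuaternionGroup n) (QuaternionGroup.a (-1))) = zq θ
      rw [hf, MonoidAlgebra.lift_of]
      show yy (-1) = zq θ
      rw [hyz_neg 1]
      show zq (θ * (((1 : ZMod (2*n)).val : ℕ) : ℝ)) = zq θ
      rw [ZMod.val_one]
      norm_num
    · rw [Set.mem_singleton_iff.mp hx]
      refine ⟨MonoidAlgebra.of ℚ _ (QuaternionGroup.xa 0), ?_⟩
      show f (MonoidAlgebra.of ℚ (QuaternionGroup n) (QuaternionGroup.xa 0)) = jq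
      rw [hf, MonoidAlgebra.lift_of]
      show zz 0 * jq = jq
      rw [hzz0, one_mul]

lemma arith (n m r' : ℕ) (hm : Odd m) (h : n = 2 ^ r' * m) :
    2 * n + ∑ d ∈ m.divisors, 2 * Nat.totient (2 * n / d) = 4 * n := by
  have key : ∀ d ∈ m.divisors, 2 * Nat.totient (2 * n / d) = 2 ^ (r' + 1) * Nat.totient (m / d) := by
    intro d hd
    obtain ⟨hdvd, hm0⟩ := Nat.mem_divisors.mp hd
    have h2 : 2 * n / d = 2 ^ (r' + 1) * (m / d) := by
      rw [h, show 2 * (2 ^ r' * m) = 2 ^ (r' + 1) * m by ring, Nat.mul_div_assoc _ hdvd]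
    have hodd : Odd (m / d) := by
      rcases Nat.even_or_odd (m / d) with he | ho
      · exfalso
        have : (2 : ℕ) ∣ m := dvd_trans he.two_dvd (Nat.div_dvd_of_dvd hdvd)
        rw [Nat.odd_iff] at hm
        omega
      · exact ho
    have hcop : Nat.Coprime (2 ^ (r' + 1)) (m / d) :=
      Nat.Coprime.pow_left _ (by rwa [Nat.coprime_two_left])
    rw [h2, Nat.totient_mul hcop,
      Nat.totient_prime_pow Nat.prime_two (Nat.succ_pos r')]
    simp only [Nat.succ_sub_one]
    ring
  rw [Finset.sum_congr rfl key, ← Finset.mul_sum,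
    Nat.sum_div_divisors m Nat.totient, Nat.sum_totient, h]
  ring

/-- Let `Q_{4n}` be the binary dihedral (dicyclic) group of order `4n` (in Mathlib,
`QuaternionGroup n`), and write `4n = 2^r·m` with `m` odd. For each divisor `d` of `m`
the rational group algebra `ℚ[Q_{4n}]` surjects onto the `ℚ`-subalgebra of the real
quaternions generated by `ℚ(ζ_{2n/d}) ⊆ ℝ[i]` (where `ζ_{2n/d} = cos(πd/n) + i·sin(πd/n)`)
and `j`; in particular `dim_ℚ ℚ[D_{2n}] + Σ_{d ∣ m} 2·φ(2n/d) = 4n`. -/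
theorem stmt_6 (n : ℕ) (hn : 0 < n) (r m : ℕ) (hm : Odd m) (h4n : 4 * n = 2 ^ r * m) :
    (∀ d ∈ m.divisors,
      ∃ f : MonoidAlgebra ℚ (QuaternionGroup n) →ₐ[ℚ] Quaternion ℝ,
        f.range = Algebra.adjoin ℚ
          {(⟨Real.cos (Real.pi * d / n), Real.sin (Real.pi * d / n), 0, 0⟩ : Quaternion ℝ),
           (⟨0, 0, 1, 0⟩ : Quaternion ℝ)}) ∧
    2 * n + ∑ d ∈ m.divisors, 2 * Nat.totient (2 * n / d) = 4 * n := by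
  obtain ⟨k, hk⟩ := hm
  constructor
  · intro d hd
    obtain ⟨hdvd, hm0⟩ := Nat.mem_divisors.mp hd
    have hdodd : Odd d := by
      rcases Nat.even_or_odd d with he | ho
      · exfalso
        have : (2 : ℕ) ∣ m := dvd_trans he.two_dvd hdvd
        omega
      · exact ho
    exact key_hom n hn d hdodd
  · rcases r with - | - | r'
    · norm_num at h4n; omega
    · norm_num at h4n; omega
    · have h : n = 2 ^ r' * m := by
        have e : (2:ℕ) ^ (r' + 2) * m = 4 * (2 ^ r' * m) := by ring
        rw [e] at h4n
        omega
      exact arith n m r' (by exact ⟨k, hk⟩) h
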